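/- arXiv:1209.5071 — 2 statements merged into one kernel-verified Lean document; each statement's English description precedes it below -/
import Mathlib

section
/- Let C be a binary self-dual code of even length n (i.e., C = C^⊥ ⊆ 𝔽₂^n with respect to the standard bilinear form), and let h be the fixed point free involution on coordinates swapping 2i-1 and 2i for each i. Suppose h preserves C. Let C(h) be the subcode of codewords fixed by h and π : C(h) → 𝔽₂^{n/2} the map sending (c₁,c₁,c₂,c₂,…,c_{n/2},c_{n/2}) to (c₁,…,c_{n/2}). Then π(C(h)) is self-dual if and only if dim C(h) = n/4. -/
/-- The standard bilinear (dot product) form on `ι → ZMod 2`. -/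
def dotForm (ι : Type*) [Fintype ι] :
    LinearMap.BilinForm (ZMod 2) (ι → ZMod 2) :=
  LinearMap.mk₂ (ZMod 2) dotProduct
    add_dotProduct smul_dotProduct
    dotProduct_add dotProduct_smul

/-- A binary code is self-dual if it equals its dual with respect to the
standard bilinear form. -/
def IsSelfDualCode {ι : Type*} [Fintype ι]
    (C : Submodule (ZMod 2) (ι → ZMod 2)) : Prop :=
  C = (dotForm ι).orthogonal C

/-- The subspace of vectors fixed by the fixed point free involution `h` swapping
the two coordinates in each pair (coordinates are indexed by `Fin m × ZMod 2`,
and `h` sends `(i, j)` to `(i, j + 1)`). -/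
def fixedSub (m : ℕ) : Submodule (ZMod 2) (Fin m × ZMod 2 → ZMod 2) where
  carrier := {v | ∀ x : Fin m × ZMod 2, v (x.1, x.2 + 1) = v x}
  add_mem' := by
    intro a b ha hb x
    simp only [Pi.add_apply, ha x, hb x]
  zero_mem' := by intro x; simp
  smul_mem' := by
    intro c a ha x
    simp only [Pi.smul_apply, ha x]

/-- The projection `π` sending `(c₁,c₁,c₂,c₂,…)` to `(c₁,c₂,…)`. -/
def projMap (m : ℕ) : (Fin m × ZMod 2 → ZMod 2) →ₗ[ZMod 2] (Fin m → ZMod 2) :=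
  LinearMap.funLeft (ZMod 2) (ZMod 2) (fun i => (i, 0))

/-! ### Auxiliary material -/

lemma dotForm_apply {ι : Type*} [Fintype ι] (u v : ι → ZMod 2) :
    dotForm ι u v = dotProduct u v := rfl

lemma dotForm_refl (ι : Type*) [Fintype ι] : (dotForm ι).IsRefl := by
  intro x y h
  rwa [dotForm_apply, dotProduct_comm]

lemma dotForm_nondeg (ι : Type*) [Fintype ι] [DecidableEq ι] :
    (dotForm ι).Nondegenerate := by
  refine ⟨fun v hv => ?_, fun v hv => ?_⟩ <;> funext i
  · have := hv (Pi.single i 1)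
    rwa [dotForm_apply, dotProduct_single, mul_one] at this
  · have := hv (Pi.single i 1)
    rwa [dotForm_apply, single_dotProduct, one_mul] at this

/-- The map `φ` sending `c` to `(c₁+c₂, c₃+c₄, …)`. -/
def phiMap (m : ℕ) : (Fin m × ZMod 2 → ZMod 2) →ₗ[ZMod 2] (Fin m → ZMod 2) where
  toFun c := fun i => c (i, 0) + c (i, 1)
  map_add' a b := by funext i; simp [Pi.add_apply]; ring
  map_smul' r a := by funext i; simp [Pi.smul_apply]; ring

lemma sum_zmod2 {M : Type*} [AddCommMonoid M] (f : ZMod 2 → M) :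
    ∑ j, f j = f 0 + f 1 := by
  rw [show (Finset.univ : Finset (ZMod 2)) = {0, 1} from by decide]
  rw [Finset.sum_pair (by decide : (0:ZMod 2) ≠ 1)]

lemma dot_proj_phi {m : ℕ} {v : Fin m × ZMod 2 → ZMod 2} (hv : v ∈ fixedSub m)
    (c : Fin m × ZMod 2 → ZMod 2) :
    dotProduct (projMap m v) (phiMap m c) = dotProduct v c := by
  have h1 : ∀ i : Fin m, v (i, 1) = v (i, 0) := fun i => hv (i, 0)
  simp only [dotProduct, projMap, LinearMap.funLeft_apply, phiMap,
    LinearMap.coe_mk, AddHom.coe_mk]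
  rw [Fintype.sum_prod_type]
  refine Finset.sum_congr rfl fun i _ => ?_
  rw [sum_zmod2 (fun j => v (i, j) * c (i, j)), h1 i, mul_add]

/-- Let `C` be a binary self-dual code of even length `n = 2m`, invariant under the
fixed point free involution `h` swapping the coordinates in each of the `m` pairs.
Then `π(C(h))` is self-dual if and only if `dim C(h) = n / 4`. -/
theorem proj_fixed_selfDual_iff_dim (m : ℕ) (hm : 0 < m)
    (C : Submodule (ZMod 2) (Fin m × ZMod 2 → ZMod 2))
    (hsd : IsSelfDualCode C)
    (hinv : ∀ c ∈ C, (fun x : Fin m × ZMod 2 => c (x.1, x.2 + 1)) ∈ C) :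
    IsSelfDualCode ((C ⊓ fixedSub m).map (projMap m)) ↔
      4 * Module.finrank (ZMod 2) ↥(C ⊓ fixedSub m) = 2 * m := by
  classical
  set p := C ⊓ fixedSub m with hp
  set D := p.map (projMap m) with hD
  set E := C.map (phiMap m) with hE
  have hjcases : ∀ j : ZMod 2, j = 0 ∨ j = 1 := by decide
  -- membership in orthogonal of C, unfolded
  have hCorth : ∀ v, v ∈ C ↔ ∀ c ∈ C, dotProduct c v = 0 := by
    intro v
    have hsd' : C = (dotForm (Fin m × ZMod 2)).orthogonal C := hsd
    exact ⟨fun h c hc => (le_of_eq hsd') h c hc,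
      fun h => (ge_of_eq hsd') (fun c hc => h c hc)⟩
  -- Claim 1 : D = orthogonal E
  have claim1 : D = (dotForm (Fin m)).orthogonal E := by
    apply le_antisymm
    · rintro _ ⟨v, hv, rfl⟩
      rw [LinearMap.BilinForm.mem_orthogonal_iff]
      rintro _ ⟨c, hc, rfl⟩
      have : dotProduct c v = 0 := (hCorth v).mp hv.1 c hc
      show dotForm (Fin m) (phiMap m c) (projMap m v) = 0
      rw [dotForm_apply, dotProduct_comm, dot_proj_phi hv.2,
        dotProduct_comm]
      exact this
    · intro w hw
      rw [LinearMap.BilinForm.mem_orthogonal_iff] at hw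
      refine ⟨fun x => w x.1, ⟨?_, fun x => rfl⟩, rfl⟩
      refine (hCorth _).mpr fun c hc => ?_
      have h2 : dotProduct (phiMap m c) w = 0 := hw (phiMap m c) ⟨c, hc, rfl⟩
      have hfix : (fun x : Fin m × ZMod 2 => w x.1) ∈ fixedSub m := fun x => rfl
      have hproj : projMap m (fun x : Fin m × ZMod 2 => w x.1) = w := rfl
      rw [dotProduct_comm, ← dot_proj_phi hfix c, hproj,
        dotProduct_comm]
      exact h2
  -- Claim 2 : E ≤ D
  have claim2 : E ≤ D := by
    rintro _ ⟨c, hc, rfl⟩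
    refine ⟨c + fun x => c (x.1, x.2 + 1), ⟨C.add_mem hc (hinv c hc), ?_⟩, ?_⟩
    · intro x
      have h2 : x.2 + 1 + 1 = x.2 := by
        have := hjcases x.2
        rcases this with h | h <;> rw [h] <;> decide
      simp only [Pi.add_apply, h2]
      exact add_comm _ _
    · funext i
      show c (i, 0) + c (i, 0 + 1) = c (i, 0) + c (i, 1)
      norm_num
  have hrefl := dotForm_refl (Fin m)
  have hnd := dotForm_nondeg (Fin m)
  -- orthogonal of D is E
  have horthD : (dotForm (Fin m)).orthogonal D = E := by
    rw [claim1, LinearMap.BilinForm.orthogonal_orthogonal hnd hrefl]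
  -- finrank facts
  have hfinD : Module.finrank (ZMod 2) D = Module.finrank (ZMod 2) p := by
    have hker : LinearMap.ker ((projMap m).domRestrict p) = ⊥ := by
      rw [LinearMap.ker_eq_bot']
      rintro ⟨v, hv⟩ hv0
      have h0 : projMap m v = 0 := hv0
      ext x
      have h00 : v (x.1, 0) = 0 := congrFun h0 x.1
      rcases hjcases x.2 with h | h
      · rw [show x = (x.1, x.2) from rfl, h]; exact h00
      · rw [show x = (x.1, x.2) from rfl, h]
        have := hv.2 (x.1, 0)
        simpa [h00] using this
    have := LinearMap.finrank_range_add_finrank_ker ((projMap m).domRestrict p)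
    rw [hker, finrank_bot, add_zero, LinearMap.range_domRestrict] at this
    exact this
  have hfintot : Module.finrank (ZMod 2) (Fin m → ZMod 2) = m :=
    Module.finrank_fin_fun _
  have hforth : Module.finrank (ZMod 2) ((dotForm (Fin m)).orthogonal D)
      = m - Module.finrank (ZMod 2) D := by
    rw [LinearMap.BilinForm.finrank_orthogonal hnd, hfintot]
  have hDle : Module.finrank (ZMod 2) D ≤ m := by
    have h := Submodule.finrank_le D
    rw [hfintot] at h
    exact h
  constructor
  · intro hself
    have h1 : Module.finrank (ZMod 2) D
        = Module.finrank (ZMod 2) ((dotForm (Fin m)).orthogonal D) := by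
      conv_lhs => rw [hself]
    rw [hforth, hfinD] at h1
    rw [← hfinD]
    omega
  · intro hdim
    rw [← hfinD] at hdim
    show D = (dotForm (Fin m)).orthogonal D
    refine (Submodule.eq_of_le_of_finrank_eq (horthD ▸ claim2) ?_).symm
    rw [hforth]
    omega
end

section
/- Every binary self-dual [8,4] code with minimum distance at least 4 is equivalent (by a coordinate permutation) to the extended Hamming code of length 8. -/
/-- The extended Hamming code `Ĥ₃` of length 8 (as the first-order Reed–Muller
code `RM(1,3)`). -/
def extHamming : Submodule (ZMod 2) (Fin 8 → ZMod 2) :=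
  Submodule.span (ZMod 2)
    {![1,1,1,1,1,1,1,1], ![0,0,0,0,1,1,1,1], ![0,0,1,1,0,0,1,1], ![0,1,0,1,0,1,0,1]}

/-- Every binary self-dual `[8,4]` code with minimum distance at least 4 is
equivalent, by a coordinate permutation, to the extended Hamming code of length 8. -/
theorem selfDual_eight_four_four_unique (C : Submodule (ZMod 2) (Fin 8 → ZMod 2))
    (hsd : IsSelfDualCode C) (hrank : Module.finrank (ZMod 2) C = 4)
    (hd : ∀ c ∈ C, c ≠ 0 → 4 ≤ hammingNorm c) :
    ∃ σ : Equiv.Perm (Fin 8),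
      C.map (LinearEquiv.funCongrLeft (ZMod 2) (ZMod 2) σ).toLinearMap = extHamming := by
  classical
  have hC : ∀ x : Fin 8 → ZMod 2, x ∈ C ↔ ∀ n ∈ C, dotProduct n x = 0 := by
    intro x
    conv_lhs => rw [hsd]
    simp [dotForm, LinearMap.BilinForm.mem_orthogonal_iff, LinearMap.BilinForm.isOrtho_def]
  have h2 : ∀ x : ZMod 2, x * x = x := by decide
  have haa : ∀ x : ZMod 2, x + x = 0 := by decide
  -- the all-ones vector is in C
  have hone : (1 : Fin 8 → ZMod 2) ∈ C := by
    rw [hC]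
    intro n hn
    have hnn : dotProduct n n = 0 := (hC n).mp hn n hn
    simpa [dotProduct, h2] using hnn
  -- picking elements of C outside small spans
  have hex : ∀ (k : ℕ) (f : Fin k → (Fin 8 → ZMod 2)), k < 4 →
      ∃ x ∈ C, x ∉ Submodule.span (ZMod 2) (Set.range f) := by
    intro k f hk
    rw [← SetLike.not_le_iff_exists]
    intro hle
    have h1 : Module.finrank (ZMod 2) C ≤
        Module.finrank (ZMod 2) (Submodule.span (ZMod 2) (Set.range f)) :=
      Submodule.finrank_mono hle
    have h2' : Module.finrank (ZMod 2) (Submodule.span (ZMod 2) (Set.range f)) ≤ k := by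
      simpa [Set.finrank] using finrank_range_le_card (R := ZMod 2) f
    omega
  obtain ⟨v, hvC, hv⟩ := hex 1 ![1] (by norm_num)
  obtain ⟨w, hwC, hw⟩ := hex 2 ![v, 1] (by norm_num)
  obtain ⟨u, huC, hu⟩ := hex 3 ![w, v, 1] (by norm_num)
  -- linear independence
  have li1 : LinearIndependent (ZMod 2) ![(1 : Fin 8 → ZMod 2)] := by
    refine linearIndependent_fin_cons.mpr ⟨linearIndependent_empty_type, ?_⟩
    simp only [Matrix.range_empty, Submodule.span_empty, Submodule.mem_bot]
    intro h
    have := congrFun h 0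
    simp at this
  have li2 : LinearIndependent (ZMod 2) ![v, (1 : Fin 8 → ZMod 2)] :=
    linearIndependent_fin_cons.mpr ⟨li1, hv⟩
  have li3 : LinearIndependent (ZMod 2) ![w, v, (1 : Fin 8 → ZMod 2)] :=
    linearIndependent_fin_cons.mpr ⟨li2, hw⟩
  have li4 : LinearIndependent (ZMod 2) ![u, w, v, (1 : Fin 8 → ZMod 2)] :=
    linearIndependent_fin_cons.mpr ⟨li3, hu⟩
  set E : Submodule (ZMod 2) (Fin 8 → ZMod 2) :=
    Submodule.span (ZMod 2) (Set.range ![u, w, v, (1 : Fin 8 → ZMod 2)]) with hE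
  have hEC : E ≤ C := by
    rw [hE, Submodule.span_le]
    rintro x ⟨k, rfl⟩
    fin_cases k <;> assumption
  have hfr : Module.finrank (ZMod 2) E = 4 := by
    rw [hE, finrank_span_eq_card li4]
    simp
  have hCE : E = C := Submodule.eq_of_le_of_finrank_le hEC (by rw [hrank, hfr])
  -- no two coordinates agree on all codewords
  have key : ∀ i j : Fin 8, v i = v j → w i = w j → u i = u j → i = j := by
    intro i j hvij hwij huij
    by_contra hij
    set e : Fin 8 → ZMod 2 := Pi.single i 1 + Pi.single j 1 with he
    have heC : e ∈ C := by
      rw [hC]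
      intro n hn
      have hnE : n ∈ E := hCE.symm ▸ hn
      rw [hE] at hnE
      have hnij : n i = n j := by
        clear hn
        induction hnE using Submodule.span_induction with
        | mem x hx =>
          obtain ⟨k, rfl⟩ := hx
          fin_cases k
          · exact huij
          · exact hwij
          · exact hvij
          · rfl
        | zero => rfl
        | add x y _ _ hx hy => simp [hx, hy]
        | smul a x _ hx => simp [hx]
      rw [he, dotProduct_add, dotProduct_single, dotProduct_single,
        mul_one, mul_one, hnij, haa]
    have hne : e ≠ 0 := by
      intro h0
      have := congrFun h0 i
      rw [he] at this
      simp [Pi.single_eq_same, Pi.single_eq_of_ne hij] at this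
    have h4 := hd e heC hne
    have hle2 : hammingNorm e ≤ 2 := by
      have hsub : ({k | e k ≠ 0} : Finset (Fin 8)) ⊆ {i, j} := by
        intro k hk
        simp only [Finset.mem_filter, Finset.mem_univ, true_and, ne_eq] at hk
        by_contra hk2
        simp only [Finset.mem_insert, Finset.mem_singleton, not_or] at hk2
        apply hk
        rw [he]
        simp [Pi.single_eq_of_ne hk2.1, Pi.single_eq_of_ne hk2.2]
      calc hammingNorm e ≤ ({i, j} : Finset (Fin 8)).card := Finset.card_le_card hsub
        _ ≤ 2 := Finset.card_insert_le _ _ |>.trans (by simp)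
    omega
  -- the coordinate functional map is bijective
  set φ : Fin 8 → ZMod 2 × ZMod 2 × ZMod 2 := fun i => (v i, w i, u i) with hφ
  have hφinj : Function.Injective φ := by
    intro i j h
    rw [hφ] at h
    exact key i j (congrArg (fun p => p.1) h) (congrArg (fun p => p.2.1) h)
      (congrArg (fun p => p.2.2) h)
  have hφbij : Function.Bijective φ := (Fintype.bijective_iff_injective_and_card φ).mpr ⟨hφinj, by decide⟩
  set ψ : Fin 8 → ZMod 2 × ZMod 2 × ZMod 2 := fun j =>
    ((![0,0,0,0,1,1,1,1] : Fin 8 → ZMod 2) j, (![0,0,1,1,0,0,1,1] : Fin 8 → ZMod 2) j,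
      (![0,1,0,1,0,1,0,1] : Fin 8 → ZMod 2) j) with hψ
  have hψbij : Function.Bijective ψ := by
    rw [hψ]; decide
  set σ : Equiv.Perm (Fin 8) :=
    (Equiv.ofBijective ψ hψbij).trans (Equiv.ofBijective φ hφbij).symm with hσ
  have hσφ : ∀ j, φ (σ j) = ψ j := by
    intro j
    have : φ (σ j) = (Equiv.ofBijective φ hφbij) ((Equiv.ofBijective φ hφbij).symm (ψ j)) := rfl
    rw [this, Equiv.apply_symm_apply]
  refine ⟨σ, ?_⟩
  rw [← hCE, hE, Submodule.map_span]
  have hvσ : v ∘ σ = ![0,0,0,0,1,1,1,1] := by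
    funext j
    exact congrArg (fun p => p.1) (hσφ j)
  have hwσ : w ∘ σ = ![0,0,1,1,0,0,1,1] := by
    funext j
    exact congrArg (fun p => p.2.1) (hσφ j)
  have huσ : u ∘ σ = ![0,1,0,1,0,1,0,1] := by
    funext j
    exact congrArg (fun p => p.2.2) (hσφ j)
  have h1σ : (1 : Fin 8 → ZMod 2) ∘ σ = ![1,1,1,1,1,1,1,1] := by
    funext j
    fin_cases j <;> rfl
  have himg : (LinearEquiv.funCongrLeft (ZMod 2) (ZMod 2) σ).toLinearMap ''
      (Set.range ![u, w, v, (1 : Fin 8 → ZMod 2)]) =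
      ({![1,1,1,1,1,1,1,1], ![0,0,0,0,1,1,1,1], ![0,0,1,1,0,0,1,1], ![0,1,0,1,0,1,0,1]} :
        Set (Fin 8 → ZMod 2)) := by
    have happ : ∀ x : Fin 8 → ZMod 2,
        (LinearEquiv.funCongrLeft (ZMod 2) (ZMod 2) σ).toLinearMap x = x ∘ σ := fun x => rfl
    simp only [Matrix.range_cons, Matrix.range_empty]
    ext x
    simp only [Set.union_empty, Set.union_singleton, Set.mem_image, Set.mem_insert_iff,
      Set.mem_singleton_iff]
    constructor
    · rintro ⟨y, hy, rfl⟩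
      rcases hy with rfl | rfl | rfl | rfl <;>
        simp [happ, h1σ, hvσ, hwσ, huσ]
    · rintro (rfl | rfl | rfl | rfl)
      · exact ⟨1, by tauto, by rw [happ, h1σ]⟩
      · exact ⟨v, by tauto, by rw [happ, hvσ]⟩
      · exact ⟨w, by tauto, by rw [happ, hwσ]⟩
      · exact ⟨u, by tauto, by rw [happ, huσ]⟩
  rw [himg, extHamming]
end
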